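/- Let w ∈ S_n, b = w^ℓ ⋯ w^1 ∈ W_w^ℓ, and 1 ≤ i < ℓ. Define ε_i(b) = max{ d ≥ 0 : ẽ_i^d(b) ≠ 0 } and φ_i(b) = max{ d ≥ 0 : f̃_i^d(b) ≠ 0 }. Then ε_i(b) = |L_i(b)| and φ_i(b) = |R_i(b)|; in particular φ_i(b) − ε_i(b) = ℓ(w^i) − ℓ(w^{i+1}). -/

import Mathlib

open scoped Classical

noncomputable section

def sT (n i : ℕ) : Equiv.Perm (Fin n) :=
  if h : 1 ≤ i ∧ i < n then Equiv.swap ⟨i - 1, by omega⟩ ⟨i, h.2⟩ else 1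

def wordProd (n : ℕ) (l : List ℕ) : Equiv.Perm (Fin n) :=
  (l.map (sT n)).prod

def len (n : ℕ) (w : Equiv.Perm (Fin n)) : ℕ :=
  sInf {k | ∃ l : List ℕ, (∀ i ∈ l, 1 ≤ i ∧ i < n) ∧ wordProd n l = w ∧ l.length = k}

def IsReducedWord (n : ℕ) (w : Equiv.Perm (Fin n)) (l : List ℕ) : Prop :=
  (∀ i ∈ l, 1 ≤ i ∧ i < n) ∧ wordProd n l = w ∧ l.length = len n w

/-- The decreasing permutation with content `A`: product of the letters of `A`
in decreasing order. -/
def dperm (n : ℕ) (A : Finset ℕ) : Equiv.Perm (Fin n) :=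
  wordProd n ((A.sort (· ≤ ·)).reverse)

/-- `c` encodes a decreasing factorization `w = wℓ ⋯ w¹` into `ℓ` decreasing factors,
where `c j` is the content of the factor `w^(j+1)` (0-indexed, so `c 0 = cont w¹`). -/
def IsDecFactorizationC (n ℓ : ℕ) (w : Equiv.Perm (Fin n)) (c : Fin ℓ → Finset ℕ) : Prop :=
  (∀ j, ∀ a ∈ c j, 1 ≤ a ∧ a < n) ∧
    (List.ofFn fun j => dperm n (c j)).reverse.prod = w ∧
    len n w = ∑ j, (c j).card

/-- Pair the letters of the first list (the content of `w^(i+1)` in decreasing order)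
with letters of the second finset (the content of `wⁱ`): each letter `b` is paired with
the smallest still unpaired `a > b`, if it exists.  Returns the pair
(unpaired letters of the first argument, unpaired letters of the second argument). -/
def pairAux : List ℕ → Finset ℕ → Finset ℕ × Finset ℕ
  | [], A => (∅, A)
  | b :: bs, A =>
    if h : (A.filter fun a => b < a).Nonempty then
      pairAux bs (A.erase ((A.filter fun a => b < a).min' h))
    else
      ((pairAux bs A).1 ∪ {b}, (pairAux bs A).2)

/-- The unpaired letters of `cont w^(i+1)` (first argument `B`) in the
`w^(i+1) wⁱ`-pairing. -/
def Ldata (B A : Finset ℕ) : Finset ℕ :=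
  (pairAux ((B.sort (· ≤ ·)).reverse) A).1

/-- The unpaired letters of `cont wⁱ` (second argument `A`) in the
`w^(i+1) wⁱ`-pairing. -/
def Rdata (B A : Finset ℕ) : Finset ℕ :=
  (pairAux ((B.sort (· ≤ ·)).reverse) A).2

/-- The raising crystal operator on a pair of contents `(B, A) = (cont w^(i+1), cont wⁱ)`. -/
def eC (B A : Finset ℕ) : Option (Finset ℕ × Finset ℕ) :=
  if h : (Ldata B A).Nonempty then
    some (B.erase ((Ldata B A).min' h),
      insert ((Ldata B A).min' h - sInf {j | (Ldata B A).min' h - j - 1 ∉ B}) A)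
  else none

/-- The lowering crystal operator on a pair of contents `(B, A) = (cont w^(i+1), cont wⁱ)`. -/
def fC (B A : Finset ℕ) : Option (Finset ℕ × Finset ℕ) :=
  if h : (Rdata B A).Nonempty then
    some (insert ((Rdata B A).max' h + sInf {j | (Rdata B A).max' h + j + 1 ∉ A}) B,
      A.erase ((Rdata B A).max' h))
  else none

/-- The crystal raising operator `ẽᵢ` (1 ≤ i < ℓ) on decreasing factorizations encoded by
contents; it acts on the factors `w^(i+1) wⁱ`, i.e. on `c ⟨i⟩` and `c ⟨i-1⟩`. -/
def eOp {ℓ : ℕ} (i : ℕ) (c : Fin ℓ → Finset ℕ) : Option (Fin ℓ → Finset ℕ) :=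
  if h : 1 ≤ i ∧ i < ℓ then
    match eC (c ⟨i, h.2⟩) (c ⟨i - 1, by omega⟩) with
    | none => none
    | some (B', A') =>
        some (Function.update (Function.update c ⟨i, h.2⟩ B') ⟨i - 1, by omega⟩ A')
  else none

/-- The crystal lowering operator `f̃ᵢ` (1 ≤ i < ℓ) on decreasing factorizations encoded by
contents. -/
def fOp {ℓ : ℕ} (i : ℕ) (c : Fin ℓ → Finset ℕ) : Option (Fin ℓ → Finset ℕ) :=
  if h : 1 ≤ i ∧ i < ℓ then
    match fC (c ⟨i, h.2⟩) (c ⟨i - 1, by omega⟩) with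
    | none => none
    | some (B', A') =>
        some (Function.update (Function.update c ⟨i, h.2⟩ B') ⟨i - 1, by omega⟩ A')
  else none

/-- `d`-fold iterate of `ẽᵢ`. -/
def eIter {ℓ : ℕ} (i : ℕ) : ℕ → (Fin ℓ → Finset ℕ) → Option (Fin ℓ → Finset ℕ)
  | 0, c => some c
  | d + 1, c => (eOp i c).bind (eIter i d)

/-- `d`-fold iterate of `f̃ᵢ`. -/
def fIter {ℓ : ℕ} (i : ℕ) : ℕ → (Fin ℓ → Finset ℕ) → Option (Fin ℓ → Finset ℕ)
  | 0, c => some c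
  | d + 1, c => (fOp i c).bind (fIter i d)


namespace CrystalAux

def FL (l : List ℕ) (A : Finset ℕ) (v : ℕ) : ℤ :=
  (l.countP (fun b => decide (v ≤ b)) : ℤ) - ((A.filter (fun a => v < a)).card : ℤ)

lemma pairAux_nil (A : Finset ℕ) : pairAux [] A = (∅, A) := rfl

lemma pairAux_cons_pos {b : ℕ} {bs : List ℕ} {A : Finset ℕ}
    (h : (A.filter fun a => b < a).Nonempty) :
    pairAux (b :: bs) A = pairAux bs (A.erase ((A.filter fun a => b < a).min' h)) := by
  rw [pairAux]; rw [dif_pos h]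

lemma pairAux_cons_neg {b : ℕ} {bs : List ℕ} {A : Finset ℕ}
    (h : ¬ (A.filter fun a => b < a).Nonempty) :
    pairAux (b :: bs) A = ((pairAux bs A).1 ∪ {b}, (pairAux bs A).2) := by
  rw [pairAux]; rw [dif_neg h]

lemma FL_cons (b : ℕ) (bs : List ℕ) (A : Finset ℕ) (v : ℕ) :
    FL (b :: bs) A v = (if v ≤ b then 1 else 0) + FL bs A v := by
  unfold FL
  rw [List.countP_cons]
  by_cases h : v ≤ b <;> simp [h] <;> push_cast <;> ring

lemma FL_erase (l : List ℕ) (A : Finset ℕ) (a v : ℕ) (ha : a ∈ A) :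
    FL l (A.erase a) v = FL l A v + (if v < a then 1 else 0) := by
  unfold FL
  rw [Finset.filter_erase]
  by_cases h : v < a
  · have hm : a ∈ A.filter (fun x => v < x) := Finset.mem_filter.2 ⟨ha, h⟩
    rw [Finset.card_erase_of_mem hm]
    have h1 : 1 ≤ (A.filter (fun x => v < x)).card := Finset.card_pos.2 ⟨a, hm⟩
    simp only [if_pos h]
    push_cast [h1]
    ring
  · rw [Finset.erase_eq_of_notMem (by simp [Finset.mem_filter, h])]
    simp [h]

lemma FL_no_l (l : List ℕ) (A : Finset ℕ) (v : ℕ) (h1 : ∀ x ∈ l, x < v) :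
    FL l A v = -((A.filter (fun a => v < a)).card : ℤ) := by
  unfold FL
  rw [List.countP_eq_zero.2 (by intro x hx; simpa using Nat.not_le.2 (h1 x hx))]
  simp

lemma FL_zero (l : List ℕ) (A : Finset ℕ) (v : ℕ)
    (h1 : ∀ x ∈ l, x < v) (h2 : ∀ a ∈ A, a ≤ v) : FL l A v = 0 := by
  rw [FL_no_l l A v h1, Finset.filter_eq_empty_iff.2 (by intro a ha; exact Nat.not_lt.2 (h2 a ha))]
  simp

lemma exists_FL_zero (l : List ℕ) (A : Finset ℕ) : ∃ v, FL l A v = 0 := by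
  refine ⟨(A ∪ l.toFinset).sup id + 1, FL_zero _ _ _ ?_ ?_⟩
  · intro x hx
    have := Finset.le_sup (f := id) (s := A ∪ l.toFinset) (Finset.mem_union_right _ (List.mem_toFinset.2 hx))
    simp only [id] at this; omega
  · intro a ha
    have := Finset.le_sup (f := id) (s := A ∪ l.toFinset) (Finset.mem_union_left _ ha)
    simp only [id] at this; omega


lemma master (l : List ℕ) (A : Finset ℕ) (hl : List.Pairwise (· > ·) l) :
    (∀ x ∈ (pairAux l A).1, x ∈ l) ∧
    (pairAux l A).2 ⊆ A ∧
    ((pairAux l A).1.card + A.card = (pairAux l A).2.card + l.length) ∧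
    (∀ v, FL l A v ≤ ((pairAux l A).1.card : ℤ)) ∧
    (∃ v, ((pairAux l A).1.card : ℤ) ≤ FL l A v) ∧
    (∀ h : (pairAux l A).1.Nonempty, FL l A ((pairAux l A).1.min' h) = (pairAux l A).1.card) ∧
    (∀ h : (pairAux l A).1.Nonempty, ∀ v, (pairAux l A).1.min' h < v →
        FL l A v ≤ ((pairAux l A).1.card : ℤ) - 1) ∧
    (∀ h : (pairAux l A).2.Nonempty, ∀ v, v < (pairAux l A).2.max' h →
        FL l A v ≤ ((pairAux l A).1.card : ℤ) - 1) ∧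
    (∀ h : (pairAux l A).2.Nonempty, ∀ s : ℕ, (∀ j < s, (pairAux l A).2.max' h + j + 1 ∈ A) →
        (pairAux l A).2.max' h + s ∉ l →
        FL l A ((pairAux l A).2.max' h + s) = (pairAux l A).1.card) := by
  induction l generalizing A with
  | nil =>
    rw [pairAux_nil, show ((∅, A) : Finset ℕ × Finset ℕ).1 = ∅ from rfl,
      show ((∅, A) : Finset ℕ × Finset ℕ).2 = A from rfl]
    refine ⟨by simp, by simp, by simp, ?_, ?_, by simp, by simp, ?_, ?_⟩
    · intro v
      rw [FL_no_l [] A v (by simp)]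
      simp
    · obtain ⟨v, hv⟩ := exists_FL_zero [] A
      exact ⟨v, by rw [hv]; simp⟩
    · intro h v hv
      rw [FL_no_l [] A v (by simp)]
      have hm : A.max' h ∈ A.filter fun a => v < a :=
        Finset.mem_filter.2 ⟨Finset.max'_mem A h, hv⟩
      have h1 : 1 ≤ (A.filter fun a => v < a).card := Finset.card_pos.2 ⟨_, hm⟩
      simp only [Finset.card_empty, Nat.cast_zero]
      omega
    · intro h s hrun hnot
      rcases Nat.eq_zero_or_pos s with rfl | hs
      · rw [FL_zero [] A _ (by simp) (fun a ha => by
          have hle : a ≤ A.max' h := Finset.le_max' A a ha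
          omega)]
        simp
      · have h1 := hrun (s - 1) (by omega)
        have h2 : A.max' h + (s - 1) + 1 ≤ A.max' h := Finset.le_max' A _ h1
        omega
  | cons b bs ih =>
    rw [List.pairwise_cons] at hl
    obtain ⟨hblt, hbs⟩ := hl
    by_cases hne : (A.filter fun a => b < a).Nonempty
    · rw [pairAux_cons_pos hne]
      set a0 := (A.filter fun a => b < a).min' hne with ha0def
      have ha0f : a0 ∈ A.filter fun a => b < a := Finset.min'_mem _ hne
      have ha0A : a0 ∈ A := (Finset.mem_filter.1 ha0f).1
      have hba0 : b < a0 := (Finset.mem_filter.1 ha0f).2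
      have ha0min : ∀ a ∈ A, b < a → a0 ≤ a := fun a ha hba =>
        Finset.min'_le _ a (Finset.mem_filter.2 ⟨ha, hba⟩)
      set A' := A.erase a0 with hA'def
      obtain ⟨ih1, ih2, ih3, ih4, ih5, ih6, ih7, ih8, ih9⟩ := ih A' hbs
      have hrel : ∀ v, FL (b :: bs) A v
          = FL bs A' v + ((if v ≤ b then 1 else 0) - (if v < a0 then 1 else 0)) := by
        intro v
        rw [FL_cons, hA'def, FL_erase bs A a0 v ha0A]
        ring
      have hAcard : A.card = A'.card + 1 := by
        rw [hA'def, Finset.card_erase_of_mem ha0A]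
        have : 1 ≤ A.card := Finset.card_pos.2 ⟨a0, ha0A⟩
        omega
      have g1 : ∀ x ∈ (pairAux bs A').1, x ∈ b :: bs := fun x hx =>
        List.mem_cons_of_mem _ (ih1 x hx)
      have g2 : (pairAux bs A').2 ⊆ A := ih2.trans (hA'def ▸ Finset.erase_subset _ _)
      have g3 : (pairAux bs A').1.card + A.card = (pairAux bs A').2.card + (b :: bs).length := by
        simp only [List.length_cons]; omega
      have g4 : ∀ v, FL (b :: bs) A v ≤ ((pairAux bs A').1.card : ℤ) := by
        intro v
        rw [hrel v]
        have h4 := ih4 v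
        by_cases h : v ≤ b
        · rw [if_pos h, if_pos (lt_of_le_of_lt h hba0)]; linarith
        · rw [if_neg h]
          by_cases h' : v < a0
          · rw [if_pos h']; linarith
          · rw [if_neg h']; linarith
      have g5 : ∃ v, ((pairAux bs A').1.card : ℤ) ≤ FL (b :: bs) A v := by
        obtain ⟨v₀, hv₀⟩ := ih5
        by_cases h : v₀ ≤ b
        · exact ⟨v₀, by rw [hrel v₀, if_pos h, if_pos (lt_of_le_of_lt h hba0)]; linarith⟩
        · by_cases h' : v₀ < a0
          · have hz : FL bs A' v₀ = -(((A'.filter fun a => v₀ < a)).card : ℤ) :=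
              FL_no_l _ _ _ (fun x hx => (hblt x hx).trans (Nat.not_le.mp h))
            have hcard0 : (pairAux bs A').1.card = 0 := by
              rw [hz] at hv₀
              omega
            obtain ⟨v, hv⟩ := exists_FL_zero (b :: bs) A
            exact ⟨v, by rw [hcard0, hv]; simp⟩
          · exact ⟨v₀, by rw [hrel v₀, if_neg h, if_neg h']; linarith⟩
      have hLsub : ∀ x ∈ (pairAux bs A').1, x < b := fun x hx => hblt x (ih1 x hx)
      have g6 : ∀ h : (pairAux bs A').1.Nonempty,
          FL (b :: bs) A ((pairAux bs A').1.min' h) = (pairAux bs A').1.card := by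
        intro h
        have hm : (pairAux bs A').1.min' h < b := hLsub _ (Finset.min'_mem _ h)
        rw [hrel, if_pos hm.le, if_pos (hm.trans hba0), ih6 h]
        ring
      have g7 : ∀ h : (pairAux bs A').1.Nonempty, ∀ v, (pairAux bs A').1.min' h < v →
          FL (b :: bs) A v ≤ ((pairAux bs A').1.card : ℤ) - 1 := by
        intro h v hv
        rw [hrel v]
        by_cases h1 : v ≤ b
        · rw [if_pos h1, if_pos (lt_of_le_of_lt h1 hba0)]
          have := ih7 h v hv; linarith
        · rw [if_neg h1]
          by_cases h2 : v < a0
          · rw [if_pos h2]; have := ih4 v; linarith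
          · rw [if_neg h2]; have := ih7 h v hv; linarith
      have g8 : ∀ h : (pairAux bs A').2.Nonempty, ∀ v, v < (pairAux bs A').2.max' h →
          FL (b :: bs) A v ≤ ((pairAux bs A').1.card : ℤ) - 1 := by
        intro h v hv
        rw [hrel v]
        by_cases h1 : v ≤ b
        · rw [if_pos h1, if_pos (lt_of_le_of_lt h1 hba0)]
          have := ih8 h v hv; linarith
        · rw [if_neg h1]
          by_cases h2 : v < a0
          · rw [if_pos h2]; have := ih4 v; linarith
          · rw [if_neg h2]; have := ih8 h v hv; linarith
      have g9 : ∀ h : (pairAux bs A').2.Nonempty, ∀ s : ℕ,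
          (∀ j < s, (pairAux bs A').2.max' h + j + 1 ∈ A) →
          (pairAux bs A').2.max' h + s ∉ (b :: bs) →
          FL (b :: bs) A ((pairAux bs A').2.max' h + s) = (pairAux bs A').1.card := by
        intro h s hrun hnot
        set a := (pairAux bs A').2.max' h with hadef
        have haA' : a ∈ A' := ih2 (Finset.max'_mem _ h)
        have haA : a ∈ A := (hA'def ▸ Finset.erase_subset _ _ : A' ⊆ A) haA'
        have hanot : a ≠ a0 := by
          rw [hA'def] at haA'
          exact Finset.ne_of_mem_erase haA'
        have hnotbs : a + s ∉ bs := fun hc => hnot (List.mem_cons_of_mem _ hc)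
        by_cases hex : ∃ j, j < s ∧ a + j + 1 = a0
        · obtain ⟨j0, hj0s, hj0⟩ := hex
          have hrun' : ∀ j < j0, a + j + 1 ∈ A' := by
            intro j hj
            rw [hA'def]
            exact Finset.mem_erase.2 ⟨by omega, hrun j (hj.trans hj0s)⟩
          have hnotbs' : a + j0 ∉ bs := fun hc => absurd (hblt _ hc) (by omega)
          have hIH := ih9 h j0 hrun' hnotbs'
          have hout1 : FL bs A' (a + j0) = -(((A'.filter fun x => a + j0 < x)).card : ℤ) :=
            FL_no_l _ _ _ (fun x hx => by have := hblt x hx; omega)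
          have hout2 : FL (b :: bs) A (a + s) = -(((A.filter fun x => a + s < x)).card : ℤ) := by
            refine FL_no_l _ _ _ ?_
            intro x hx
            rcases List.mem_cons.1 hx with rfl | hx'
            · omega
            · have := hblt x hx'; omega
          have hsub : (A.filter fun x => a + s < x) ⊆ (A'.filter fun x => a + j0 < x) := by
            intro x hx
            obtain ⟨hxA, hxgt⟩ := Finset.mem_filter.1 hx
            rw [hA'def]
            exact Finset.mem_filter.2 ⟨Finset.mem_erase.2 ⟨by omega, hxA⟩, by omega⟩
          have hle2 : FL bs A' (a + j0) ≤ FL (b :: bs) A (a + s) := by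
            rw [hout1, hout2]
            have := Finset.card_le_card hsub
            omega
          have hle1 := g4 (a + s)
          rw [hIH] at hle2
          linarith
        · push_neg at hex
          have hrun' : ∀ j < s, a + j + 1 ∈ A' := by
            intro j hj
            rw [hA'def]
            exact Finset.mem_erase.2 ⟨hex j hj, hrun j hj⟩
          have hIH := ih9 h s hrun' hnotbs
          have hcase : a + s ≤ b ∨ a0 ≤ a + s := by
            by_contra hcon
            push_neg at hcon
            obtain ⟨hc1, hc2⟩ := hcon
            have hasA : a + s ∈ A := by
              rcases Nat.eq_zero_or_pos s with rfl | hs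
              · simpa using haA
              · have h' := hrun (s - 1) (by omega)
                have he : a + (s - 1) + 1 = a + s := by omega
                rwa [he] at h'
            have := ha0min (a + s) hasA hc1
            omega
          rw [hrel (a + s), hIH]
          rcases hcase with hc | hc
          · rw [if_pos hc, if_pos (lt_of_le_of_lt hc hba0)]; ring
          · rw [if_neg (by omega), if_neg (by omega)]; ring
      exact ⟨g1, g2, g3, g4, g5, g6, g7, g8, g9⟩
    · rw [pairAux_cons_neg hne]
      have hA : ∀ a ∈ A, a ≤ b := by
        intro a ha
        by_contra hcon
        exact hne ⟨a, Finset.mem_filter.2 ⟨ha, Nat.not_le.mp hcon⟩⟩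
      obtain ⟨ih1, ih2, ih3, ih4, ih5, ih6, ih7, ih8, ih9⟩ := ih A hbs
      have hrel : ∀ v, FL (b :: bs) A v = FL bs A v + (if v ≤ b then 1 else 0) := by
        intro v; rw [FL_cons]; ring
      have hbnot : b ∉ (pairAux bs A).1 := fun hc => absurd (hblt b (ih1 b hc)) (lt_irrefl b)
      have hunion : (pairAux bs A).1 ∪ {b} = insert b (pairAux bs A).1 := by rw [Finset.union_comm]; exact (Finset.insert_eq b _).symm
      simp only [hunion]
      have hcardI : (insert b (pairAux bs A).1).card = (pairAux bs A).1.card + 1 :=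
        Finset.card_insert_of_notMem hbnot
      have hz : ∀ v, b < v → FL bs A v = 0 := fun v hv =>
        FL_zero bs A v (fun x hx => (hblt x hx).trans hv) (fun a ha => (hA a ha).trans hv.le)
      have hzb : FL bs A b = 0 := FL_zero bs A b (fun x hx => hblt x hx) hA
      refine ⟨?_, ih2, ?_, ?_, ?_, ?_, ?_, ?_, ?_⟩
      · intro x hx
        rcases Finset.mem_insert.1 hx with rfl | hx'
        · exact List.mem_cons_self
        · exact List.mem_cons_of_mem _ (ih1 x hx')
      · simp only [List.length_cons, hcardI]; omega
      · intro v
        rw [hrel v, hcardI]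
        have := ih4 v
        by_cases h : v ≤ b
        · rw [if_pos h]; push_cast; linarith
        · rw [if_neg h]; push_cast; linarith
      · obtain ⟨v₀, hv₀⟩ := ih5
        by_cases h : v₀ ≤ b
        · refine ⟨v₀, ?_⟩
          rw [hrel v₀, if_pos h, hcardI]
          push_cast; linarith
        · have h0 : FL bs A v₀ = 0 := hz v₀ (Nat.not_le.mp h)
          have hc0 : (pairAux bs A).1.card = 0 := by rw [h0] at hv₀; omega
          refine ⟨b, ?_⟩
          rw [hrel b, if_pos le_rfl, hzb, hcardI, hc0]
          simp
      · intro h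
        rcases Finset.eq_empty_or_nonempty (pairAux bs A).1 with he | h0
        · simp only [he, LawfulSingleton.insert_empty_eq, Finset.min'_singleton]
          rw [hrel b, if_pos le_rfl, hzb]
          simp
        · have hminlt : (pairAux bs A).1.min' h0 < b :=
            hblt _ (ih1 _ (Finset.min'_mem _ h0))
          have heq : (insert b (pairAux bs A).1).min' h = (pairAux bs A).1.min' h0 := by
            apply le_antisymm
            · exact Finset.min'_le _ _ (Finset.mem_insert_of_mem (Finset.min'_mem _ h0))
            · apply Finset.le_min'
              intro y hy
              rcases Finset.mem_insert.1 hy with rfl | hy'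
              · exact hminlt.le
              · exact Finset.min'_le _ _ hy'
          rw [heq, hrel _, if_pos hminlt.le, ih6 h0, hcardI]
          push_cast; ring
      · intro h v hv
        rcases Finset.eq_empty_or_nonempty (pairAux bs A).1 with he | h0
        · rw [hcardI, he]
          simp only [he, LawfulSingleton.insert_empty_eq, Finset.min'_singleton] at hv
          rw [hrel v, if_neg (by omega), hz v hv]
          simp
        · have hminlt : (pairAux bs A).1.min' h0 < b :=
            hblt _ (ih1 _ (Finset.min'_mem _ h0))
          have heq : (insert b (pairAux bs A).1).min' h = (pairAux bs A).1.min' h0 := by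
            apply le_antisymm
            · exact Finset.min'_le _ _ (Finset.mem_insert_of_mem (Finset.min'_mem _ h0))
            · apply Finset.le_min'
              intro y hy
              rcases Finset.mem_insert.1 hy with rfl | hy'
              · exact hminlt.le
              · exact Finset.min'_le _ _ hy'
          rw [heq] at hv
          rw [hrel v, hcardI]
          by_cases h1 : v ≤ b
          · rw [if_pos h1]
            have := ih7 h0 v hv
            push_cast; linarith
          · rw [if_neg h1, hz v (Nat.not_le.mp h1)]
            have : 0 ≤ ((pairAux bs A).1.card : ℤ) := by positivity
            push_cast; linarith
      · intro h v hv
        have hamem : (pairAux bs A).2.max' h ∈ A := ih2 (Finset.max'_mem _ h)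
        have hab : (pairAux bs A).2.max' h ≤ b := hA _ hamem
        rw [hrel v, if_pos (by omega), hcardI]
        have := ih8 h v hv
        push_cast; linarith
      · intro h s hrun hnot
        have hamem : (pairAux bs A).2.max' h ∈ A := ih2 (Finset.max'_mem _ h)
        have hab : (pairAux bs A).2.max' h ≤ b := hA _ hamem
        have hne_b : (pairAux bs A).2.max' h + s ≠ b := fun hc =>
          hnot (hc ▸ List.mem_cons_self)
        have hasb : (pairAux bs A).2.max' h + s ≤ b := by
          rcases Nat.eq_zero_or_pos s with rfl | hs
          · omega
          · have h' := hrun (s - 1) (by omega)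
            have he : (pairAux bs A).2.max' h + (s - 1) + 1 = (pairAux bs A).2.max' h + s := by
              omega
            rw [he] at h'
            exact hA _ h'
        rw [hrel _, if_pos hasb, ih9 h s hrun (fun hc => hnot (List.mem_cons_of_mem _ hc)),
          hcardI]
        push_cast; ring
def FF (B A : Finset ℕ) (v : ℕ) : ℤ :=
  ((B.filter (fun b => v ≤ b)).card : ℤ) - ((A.filter (fun a => v < a)).card : ℤ)

lemma sorted_revsort (B : Finset ℕ) : List.Pairwise (· > ·) ((B.sort (· ≤ ·)).reverse) := by
  rw [List.pairwise_reverse]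
  exact B.sortedLT_sort.pairwise

lemma countP_sort (B : Finset ℕ) (v : ℕ) :
    ((B.sort (· ≤ ·)).reverse).countP (fun b => decide (v ≤ b))
      = (B.filter (fun b => v ≤ b)).card := by
  rw [List.countP_reverse, (Finset.sort_perm_toList B (· ≤ ·)).countP_eq]
  show List.countP _ (Multiset.toList B.val) = _
  rw [← Multiset.coe_countP (fun b => v ≤ b), Multiset.coe_toList,
    Multiset.countP_eq_card_filter]
  rfl

lemma FL_revsort (B A : Finset ℕ) (v : ℕ) : FL ((B.sort (· ≤ ·)).reverse) A v = FF B A v := by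
  unfold FL FF
  rw [countP_sort]

lemma masterF (B A : Finset ℕ) :
    (Ldata B A ⊆ B) ∧
    (Rdata B A ⊆ A) ∧
    ((Ldata B A).card + A.card = (Rdata B A).card + B.card) ∧
    (∀ v, FF B A v ≤ ((Ldata B A).card : ℤ)) ∧
    (∃ v, ((Ldata B A).card : ℤ) ≤ FF B A v) ∧
    (∀ h : (Ldata B A).Nonempty, FF B A ((Ldata B A).min' h) = (Ldata B A).card) ∧
    (∀ h : (Ldata B A).Nonempty, ∀ v, (Ldata B A).min' h < v →
        FF B A v ≤ ((Ldata B A).card : ℤ) - 1) ∧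
    (∀ h : (Rdata B A).Nonempty, ∀ v, v < (Rdata B A).max' h →
        FF B A v ≤ ((Ldata B A).card : ℤ) - 1) ∧
    (∀ h : (Rdata B A).Nonempty, ∀ s : ℕ, (∀ j < s, (Rdata B A).max' h + j + 1 ∈ A) →
        (Rdata B A).max' h + s ∉ B → FF B A ((Rdata B A).max' h + s) = (Ldata B A).card) := by
  obtain ⟨m1, m2, m3, m4, m5, m6, m7, m8, m9⟩ :=
    master ((B.sort (· ≤ ·)).reverse) A (sorted_revsort B)
  unfold Ldata Rdata
  simp only [FL_revsort] at m4 m5 m6 m7 m8 m9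
  refine ⟨?_, m2, ?_, m4, m5, m6, m7, m8, ?_⟩
  · intro x hx
    have hx2 := m1 x hx
    rwa [List.mem_reverse, Finset.mem_sort] at hx2
  · have hlen : ((B.sort (· ≤ ·)).reverse).length = B.card := by
      rw [List.length_reverse, Finset.length_sort]
    omega
  · intro h s hrun hns
    exact m9 h s hrun (fun hcmem => hns (by rwa [List.mem_reverse, Finset.mem_sort] at hcmem))

lemma cardB_erase_le (B : Finset ℕ) (x v : ℕ) :
    ((B.erase x).filter fun b => v ≤ b).card ≤ (B.filter fun b => v ≤ b).card :=
  Finset.card_le_card (Finset.monotone_filter_left _ (Finset.erase_subset x B))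

lemma cardB_erase_eq (B : Finset ℕ) (x v : ℕ) (hx : x ∈ B) (hv : v ≤ x) :
    ((B.erase x).filter fun b => v ≤ b).card + 1 = (B.filter fun b => v ≤ b).card := by
  have hm : x ∈ B.filter fun b => v ≤ b := Finset.mem_filter.2 ⟨hx, hv⟩
  rw [Finset.filter_erase, Finset.card_erase_of_mem hm]
  have h1 : 1 ≤ (B.filter fun b => v ≤ b).card := Finset.card_pos.2 ⟨x, hm⟩
  omega

lemma cardB_insert_le (B : Finset ℕ) (x v : ℕ) :
    ((insert x B).filter fun b => v ≤ b).card ≤ (B.filter fun b => v ≤ b).card + 1 := by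
  rw [Finset.filter_insert]
  by_cases h : v ≤ x
  · rw [if_pos h]; exact Finset.card_insert_le _ _
  · rw [if_neg h]; omega

lemma cardB_insert_eq_of_gt (B : Finset ℕ) (x v : ℕ) (hx : ¬ v ≤ x) :
    ((insert x B).filter fun b => v ≤ b).card = (B.filter fun b => v ≤ b).card := by
  rw [Finset.filter_insert, if_neg hx]

lemma cardB_insert_eq (B : Finset ℕ) (x v : ℕ) (hxB : x ∉ B) (hv : v ≤ x) :
    ((insert x B).filter fun b => v ≤ b).card = (B.filter fun b => v ≤ b).card + 1 := by
  rw [Finset.filter_insert, if_pos hv,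
    Finset.card_insert_of_notMem (fun hcmem => hxB (Finset.mem_filter.1 hcmem).1)]

lemma cardA_insert_ge (A : Finset ℕ) (x v : ℕ) :
    (A.filter fun a => v < a).card ≤ ((insert x A).filter fun a => v < a).card :=
  Finset.card_le_card (Finset.monotone_filter_left _ (Finset.subset_insert x A))

lemma cardA_insert_eq (A : Finset ℕ) (x v : ℕ) (hx : ¬ v < x) :
    ((insert x A).filter fun a => v < a).card = (A.filter fun a => v < a).card := by
  rw [Finset.filter_insert, if_neg hx]

lemma cardA_erase_ge (A : Finset ℕ) (x v : ℕ) :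
    (A.filter fun a => v < a).card ≤ ((A.erase x).filter fun a => v < a).card + 1 := by
  rw [Finset.filter_erase]
  have := Finset.pred_card_le_card_erase (s := A.filter fun a => v < a) (a := x)
  omega

lemma cardA_erase_eq (A : Finset ℕ) (x v : ℕ) (hx : ¬ v < x) :
    ((A.erase x).filter fun a => v < a).card = (A.filter fun a => v < a).card := by
  rw [Finset.filter_erase,
    Finset.erase_eq_of_notMem (fun hcmem => hx (Finset.mem_filter.1 hcmem).2)]

lemma LemE (B A : Finset ℕ) (h : (Ldata B A).Nonempty) (ct : ℕ)
    (hct : ct ≤ (Ldata B A).min' h) :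
    (Ldata (B.erase ((Ldata B A).min' h)) (insert ct A)).card + 1 = (Ldata B A).card := by
  obtain ⟨m1, m2, m3, m4, m5, m6, m7, m8, m9⟩ := masterF B A
  obtain ⟨m1', m2', m3', m4', m5', m6', m7', m8', m9'⟩ :=
    masterF (B.erase ((Ldata B A).min' h)) (insert ct A)
  have hcB : (Ldata B A).min' h ∈ B := m1 (Finset.min'_mem _ h)
  have key1 : FF (B.erase ((Ldata B A).min' h)) (insert ct A) ((Ldata B A).min' h)
      = FF B A ((Ldata B A).min' h) - 1 := by
    unfold FF
    have e1 := cardB_erase_eq B ((Ldata B A).min' h) ((Ldata B A).min' h) hcB le_rfl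
    have e2 := cardA_insert_eq A ct ((Ldata B A).min' h) (by omega)
    omega
  have hle1 : ((Ldata B A).card : ℤ) - 1
      ≤ ((Ldata (B.erase ((Ldata B A).min' h)) (insert ct A)).card : ℤ) := by
    have h4 := m4' ((Ldata B A).min' h)
    rw [key1, m6 h] at h4
    omega
  have hle2 : ((Ldata (B.erase ((Ldata B A).min' h)) (insert ct A)).card : ℤ)
      ≤ ((Ldata B A).card : ℤ) - 1 := by
    obtain ⟨v, hv⟩ := m5'
    by_cases hvc : v ≤ (Ldata B A).min' h
    · have hcomp : FF (B.erase ((Ldata B A).min' h)) (insert ct A) v ≤ FF B A v - 1 := by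
        unfold FF
        have e1 := cardB_erase_eq B ((Ldata B A).min' h) v hcB hvc
        have e2 := cardA_insert_ge A ct v
        omega
      have h4 := m4 v
      linarith
    · have hcomp : FF (B.erase ((Ldata B A).min' h)) (insert ct A) v ≤ FF B A v := by
        unfold FF
        have e1 := cardB_erase_le B ((Ldata B A).min' h) v
        have e2 := cardA_insert_ge A ct v
        omega
      have h7 := m7 h v (Nat.not_le.mp hvc)
      linarith
  have hpos : 1 ≤ (Ldata B A).card := Finset.card_pos.2 h
  omega

lemma LemF (B A : Finset ℕ) (h : (Rdata B A).Nonempty) (s : ℕ)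
    (hrun : ∀ j < s, (Rdata B A).max' h + j + 1 ∈ A) :
    (Rdata (insert ((Rdata B A).max' h + s) B) (A.erase ((Rdata B A).max' h))).card + 1
      = (Rdata B A).card := by
  obtain ⟨m1, m2, m3, m4, m5, m6, m7, m8, m9⟩ := masterF B A
  obtain ⟨m1', m2', m3', m4', m5', m6', m7', m8', m9'⟩ :=
    masterF (insert ((Rdata B A).max' h + s) B) (A.erase ((Rdata B A).max' h))
  have haA : (Rdata B A).max' h ∈ A := m2 (Finset.max'_mem _ h)
  have hR1 : 1 ≤ (Rdata B A).card := Finset.card_pos.2 h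
  have hA1 : 1 ≤ A.card := Finset.card_pos.2 ⟨_, haA⟩
  have hAcard : (A.erase ((Rdata B A).max' h)).card + 1 = A.card := by
    rw [Finset.card_erase_of_mem haA]; omega
  by_cases hin : (Rdata B A).max' h + s ∈ B
  · -- cardL' = cardL
    have hBcard : (insert ((Rdata B A).max' h + s) B).card = B.card := by
      rw [Finset.insert_eq_self.2 hin]
    have hM : (Ldata (insert ((Rdata B A).max' h + s) B) (A.erase ((Rdata B A).max' h))).card
        = (Ldata B A).card := by
      have hge : ((Ldata B A).card : ℤ)
          ≤ (Ldata (insert ((Rdata B A).max' h + s) B) (A.erase ((Rdata B A).max' h))).card := by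
        obtain ⟨v, hv⟩ := m5
        have hveq : FF B A v = (Ldata B A).card := le_antisymm (m4 v) hv
        have hva : (Rdata B A).max' h ≤ v := by
          by_contra hcon
          have := m8 h v (Nat.not_le.mp hcon)
          omega
        have hcomp : FF (insert ((Rdata B A).max' h + s) B) (A.erase ((Rdata B A).max' h)) v
            = FF B A v := by
          unfold FF
          have e1 : (insert ((Rdata B A).max' h + s) B) = B := Finset.insert_eq_self.2 hin
          have e2 := cardA_erase_eq A ((Rdata B A).max' h) v (by omega)
          rw [e1, e2]
        have h4 := m4' v
        rw [hcomp, hveq] at h4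
        exact h4
      have hle : ((Ldata (insert ((Rdata B A).max' h + s) B)
          (A.erase ((Rdata B A).max' h))).card : ℤ) ≤ (Ldata B A).card := by
        obtain ⟨v, hv⟩ := m5'
        by_cases hvlt : v < (Rdata B A).max' h
        · have hcomp : FF (insert ((Rdata B A).max' h + s) B) (A.erase ((Rdata B A).max' h)) v
              ≤ FF B A v + 1 := by
            unfold FF
            have e1 : (insert ((Rdata B A).max' h + s) B) = B := Finset.insert_eq_self.2 hin
            have e2 := cardA_erase_ge A ((Rdata B A).max' h) v
            rw [e1]
            omega
          have h8 := m8 h v hvlt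
          linarith
        · have hcomp : FF (insert ((Rdata B A).max' h + s) B) (A.erase ((Rdata B A).max' h)) v
              = FF B A v := by
            unfold FF
            have e1 : (insert ((Rdata B A).max' h + s) B) = B := Finset.insert_eq_self.2 hin
            have e2 := cardA_erase_eq A ((Rdata B A).max' h) v (by omega)
            rw [e1, e2]
          have h4 := m4 v
          linarith
      omega
    omega
  · -- cardL' = cardL + 1
    have hBcard : (insert ((Rdata B A).max' h + s) B).card = B.card + 1 :=
      Finset.card_insert_of_notMem hin
    have hFFrun := m9 h s hrun hin
    have hM : (Ldata (insert ((Rdata B A).max' h + s) B) (A.erase ((Rdata B A).max' h))).card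
        = (Ldata B A).card + 1 := by
      have hge : ((Ldata B A).card : ℤ) + 1
          ≤ (Ldata (insert ((Rdata B A).max' h + s) B) (A.erase ((Rdata B A).max' h))).card := by
        have hcomp : FF (insert ((Rdata B A).max' h + s) B) (A.erase ((Rdata B A).max' h))
            ((Rdata B A).max' h + s) = FF B A ((Rdata B A).max' h + s) + 1 := by
          unfold FF
          have e1 := cardB_insert_eq B ((Rdata B A).max' h + s) ((Rdata B A).max' h + s) hin
            le_rfl
          have e2 := cardA_erase_eq A ((Rdata B A).max' h) ((Rdata B A).max' h + s) (by omega)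
          omega
        have h4 := m4' ((Rdata B A).max' h + s)
        rw [hcomp, hFFrun] at h4
        omega
      have hle : ((Ldata (insert ((Rdata B A).max' h + s) B)
          (A.erase ((Rdata B A).max' h))).card : ℤ) ≤ (Ldata B A).card + 1 := by
        obtain ⟨v, hv⟩ := m5'
        by_cases hvlt : v < (Rdata B A).max' h
        · have hcomp : FF (insert ((Rdata B A).max' h + s) B) (A.erase ((Rdata B A).max' h)) v
              ≤ FF B A v + 2 := by
            unfold FF
            have e1 := cardB_insert_le B ((Rdata B A).max' h + s) v
            have e2 := cardA_erase_ge A ((Rdata B A).max' h) v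
            omega
          have h8 := m8 h v hvlt
          linarith
        · by_cases hvs : v ≤ (Rdata B A).max' h + s
          · have hcomp : FF (insert ((Rdata B A).max' h + s) B) (A.erase ((Rdata B A).max' h)) v
                ≤ FF B A v + 1 := by
              unfold FF
              have e1 := cardB_insert_le B ((Rdata B A).max' h + s) v
              have e2 := cardA_erase_eq A ((Rdata B A).max' h) v (by omega)
              omega
            have h4 := m4 v
            linarith
          · have hcomp : FF (insert ((Rdata B A).max' h + s) B) (A.erase ((Rdata B A).max' h)) v
                = FF B A v := by
              unfold FF
              have e1 := cardB_insert_eq_of_gt B ((Rdata B A).max' h + s) v (by omega)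
              have e2 := cardA_erase_eq A ((Rdata B A).max' h) v (by omega)
              rw [e1, e2]
            have h4 := m4 v
            linarith
      omega
    omega
lemma run_of_sInf (A : Finset ℕ) (a : ℕ) : ∀ j < sInf {j | a + j + 1 ∉ A}, a + j + 1 ∈ A := by
  intro j hj
  by_contra hcmem
  have hle : sInf {j | a + j + 1 ∉ A} ≤ j := Nat.sInf_le hcmem
  omega

lemma eC_none (B A : Finset ℕ) (h : ¬ (Ldata B A).Nonempty) : eC B A = none := by
  unfold eC; rw [dif_neg h]

lemma eC_some (B A : Finset ℕ) (h : (Ldata B A).Nonempty) :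
    eC B A = some (B.erase ((Ldata B A).min' h),
      insert ((Ldata B A).min' h - sInf {j | (Ldata B A).min' h - j - 1 ∉ B}) A) := by
  unfold eC; rw [dif_pos h]

lemma fC_none (B A : Finset ℕ) (h : ¬ (Rdata B A).Nonempty) : fC B A = none := by
  unfold fC; rw [dif_neg h]

lemma fC_some (B A : Finset ℕ) (h : (Rdata B A).Nonempty) :
    fC B A = some (insert ((Rdata B A).max' h + sInf {j | (Rdata B A).max' h + j + 1 ∉ A}) B,
      A.erase ((Rdata B A).max' h)) := by
  unfold fC; rw [dif_pos h]

lemma key_eOp {ℓ : ℕ} (i : ℕ) (hi : 1 ≤ i) (hℓ : i < ℓ) (c : Fin ℓ → Finset ℕ)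
    (h : (Ldata (c ⟨i, hℓ⟩) (c ⟨i - 1, Nat.sub_lt_of_lt hℓ⟩)).Nonempty) :
    ∃ c' : Fin ℓ → Finset ℕ, eOp i c = some c' ∧
      (Ldata (c' ⟨i, hℓ⟩) (c' ⟨i - 1, Nat.sub_lt_of_lt hℓ⟩)).card + 1
        = (Ldata (c ⟨i, hℓ⟩) (c ⟨i - 1, Nat.sub_lt_of_lt hℓ⟩)).card := by
  have hne : (⟨i, hℓ⟩ : Fin ℓ) ≠ ⟨i - 1, Nat.sub_lt_of_lt hℓ⟩ := by
    simp only [ne_eq, Fin.mk.injEq]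
    omega
  refine ⟨Function.update (Function.update c ⟨i, hℓ⟩
      ((c ⟨i, hℓ⟩).erase ((Ldata (c ⟨i, hℓ⟩) (c ⟨i - 1, Nat.sub_lt_of_lt hℓ⟩)).min' h)))
      ⟨i - 1, Nat.sub_lt_of_lt hℓ⟩
      (insert ((Ldata (c ⟨i, hℓ⟩) (c ⟨i - 1, Nat.sub_lt_of_lt hℓ⟩)).min' h -
        sInf {j | (Ldata (c ⟨i, hℓ⟩) (c ⟨i - 1, Nat.sub_lt_of_lt hℓ⟩)).min' h - j - 1 ∉ c ⟨i, hℓ⟩})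
        (c ⟨i - 1, Nat.sub_lt_of_lt hℓ⟩)), ?_, ?_⟩
  · unfold eOp
    rw [dif_pos ⟨hi, hℓ⟩, eC_some _ _ h]
  · rw [Function.update_self, Function.update_of_ne hne, Function.update_self]
    exact LemE _ _ h _ (Nat.sub_le _ _)

lemma key_fOp {ℓ : ℕ} (i : ℕ) (hi : 1 ≤ i) (hℓ : i < ℓ) (c : Fin ℓ → Finset ℕ)
    (h : (Rdata (c ⟨i, hℓ⟩) (c ⟨i - 1, Nat.sub_lt_of_lt hℓ⟩)).Nonempty) :
    ∃ c' : Fin ℓ → Finset ℕ, fOp i c = some c' ∧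
      (Rdata (c' ⟨i, hℓ⟩) (c' ⟨i - 1, Nat.sub_lt_of_lt hℓ⟩)).card + 1
        = (Rdata (c ⟨i, hℓ⟩) (c ⟨i - 1, Nat.sub_lt_of_lt hℓ⟩)).card := by
  have hne : (⟨i, hℓ⟩ : Fin ℓ) ≠ ⟨i - 1, Nat.sub_lt_of_lt hℓ⟩ := by
    simp only [ne_eq, Fin.mk.injEq]
    omega
  refine ⟨Function.update (Function.update c ⟨i, hℓ⟩
      (insert ((Rdata (c ⟨i, hℓ⟩) (c ⟨i - 1, Nat.sub_lt_of_lt hℓ⟩)).max' h +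
          sInf {j | (Rdata (c ⟨i, hℓ⟩) (c ⟨i - 1, Nat.sub_lt_of_lt hℓ⟩)).max' h + j + 1 ∉ c ⟨i - 1, Nat.sub_lt_of_lt hℓ⟩})
        (c ⟨i, hℓ⟩)))
      ⟨i - 1, Nat.sub_lt_of_lt hℓ⟩
      ((c ⟨i - 1, Nat.sub_lt_of_lt hℓ⟩).erase ((Rdata (c ⟨i, hℓ⟩) (c ⟨i - 1, Nat.sub_lt_of_lt hℓ⟩)).max' h)), ?_, ?_⟩
  · unfold fOp
    rw [dif_pos ⟨hi, hℓ⟩, fC_some _ _ h]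
  · rw [Function.update_self, Function.update_of_ne hne, Function.update_self]
    exact LemF _ _ h _ (run_of_sInf _ _)

lemma eIter_isSome_iff {ℓ : ℕ} (i : ℕ) (hi : 1 ≤ i) (hℓ : i < ℓ) :
    ∀ (d : ℕ) (c : Fin ℓ → Finset ℕ),
      (eIter i d c).isSome ↔ d ≤ (Ldata (c ⟨i, hℓ⟩) (c ⟨i - 1, Nat.sub_lt_of_lt hℓ⟩)).card := by
  intro d
  induction d with
  | zero =>
    intro c
    rw [show eIter i 0 c = some c from rfl]
    simp
  | succ d ih =>
    intro c
    by_cases h : (Ldata (c ⟨i, hℓ⟩) (c ⟨i - 1, Nat.sub_lt_of_lt hℓ⟩)).Nonempty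
    · obtain ⟨c', hc', hcard⟩ := key_eOp i hi hℓ c h
      have hstep : eIter i (d + 1) c = eIter i d c' := by
        show (eOp i c).bind (eIter i d) = _
        rw [hc']
        rfl
      rw [hstep, ih c']
      omega
    · have hnone : eOp i c = none := by
        unfold eOp
        rw [dif_pos ⟨hi, hℓ⟩, eC_none _ _ h]
      have hstep : eIter i (d + 1) c = none := by
        show (eOp i c).bind (eIter i d) = _
        rw [hnone]
        rfl
      have hcard0 : (Ldata (c ⟨i, hℓ⟩) (c ⟨i - 1, Nat.sub_lt_of_lt hℓ⟩)).card = 0 :=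
        Finset.card_eq_zero.2 (Finset.not_nonempty_iff_eq_empty.1 h)
      rw [hstep, hcard0]
      simp

lemma fIter_isSome_iff {ℓ : ℕ} (i : ℕ) (hi : 1 ≤ i) (hℓ : i < ℓ) :
    ∀ (d : ℕ) (c : Fin ℓ → Finset ℕ),
      (fIter i d c).isSome ↔ d ≤ (Rdata (c ⟨i, hℓ⟩) (c ⟨i - 1, Nat.sub_lt_of_lt hℓ⟩)).card := by
  intro d
  induction d with
  | zero =>
    intro c
    rw [show fIter i 0 c = some c from rfl]
    simp
  | succ d ih =>
    intro c
    by_cases h : (Rdata (c ⟨i, hℓ⟩) (c ⟨i - 1, Nat.sub_lt_of_lt hℓ⟩)).Nonempty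
    · obtain ⟨c', hc', hcard⟩ := key_fOp i hi hℓ c h
      have hstep : fIter i (d + 1) c = fIter i d c' := by
        show (fOp i c).bind (fIter i d) = _
        rw [hc']
        rfl
      rw [hstep, ih c']
      omega
    · have hnone : fOp i c = none := by
        unfold fOp
        rw [dif_pos ⟨hi, hℓ⟩, fC_none _ _ h]
      have hstep : fIter i (d + 1) c = none := by
        show (fOp i c).bind (fIter i d) = _
        rw [hnone]
        rfl
      have hcard0 : (Rdata (c ⟨i, hℓ⟩) (c ⟨i - 1, Nat.sub_lt_of_lt hℓ⟩)).card = 0 :=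
        Finset.card_eq_zero.2 (Finset.not_nonempty_iff_eq_empty.1 h)
      rw [hstep, hcard0]
      simp

end CrystalAux

open CrystalAux in
/-- `εᵢ(b) = |Lᵢ(b)|` and `φᵢ(b) = |Rᵢ(b)|`; in particular
`φᵢ(b) - εᵢ(b) = ℓ(wⁱ) - ℓ(w^(i+1))`. -/
theorem eps_phi_eq_card (n ℓ : ℕ) (w : Equiv.Perm (Fin n)) (c : Fin ℓ → Finset ℕ)
    (i : ℕ) (hi : 1 ≤ i) (hiℓ : i < ℓ) (hc : IsDecFactorizationC n ℓ w c) :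
    sSup {d : ℕ | (eIter i d c).isSome} = (Ldata (c ⟨i, hiℓ⟩) (c ⟨i - 1, by omega⟩)).card ∧
    sSup {d : ℕ | (fIter i d c).isSome} = (Rdata (c ⟨i, hiℓ⟩) (c ⟨i - 1, by omega⟩)).card ∧
    (Nat.cast (R := ℤ) (sSup {d : ℕ | (fIter i d c).isSome}) -
        Nat.cast (R := ℤ) (sSup {d : ℕ | (eIter i d c).isSome})) =
      ((c ⟨i - 1, by omega⟩).card : ℤ) - ((c ⟨i, hiℓ⟩).card : ℤ) := by
  have h1 : {d : ℕ | (eIter i d c).isSome}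
      = Set.Iic ((Ldata (c ⟨i, hiℓ⟩) (c ⟨i - 1, by omega⟩)).card) := by
    ext d
    simp only [Set.mem_setOf_eq, Set.mem_Iic]
    exact eIter_isSome_iff i hi hiℓ d c
  have h2 : {d : ℕ | (fIter i d c).isSome}
      = Set.Iic ((Rdata (c ⟨i, hiℓ⟩) (c ⟨i - 1, by omega⟩)).card) := by
    ext d
    simp only [Set.mem_setOf_eq, Set.mem_Iic]
    exact fIter_isSome_iff i hi hiℓ d c
  have e1 : sSup {d : ℕ | (eIter i d c).isSome}
      = (Ldata (c ⟨i, hiℓ⟩) (c ⟨i - 1, by omega⟩)).card := by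
    rw [h1]; exact csSup_Iic
  have e2 : sSup {d : ℕ | (fIter i d c).isSome}
      = (Rdata (c ⟨i, hiℓ⟩) (c ⟨i - 1, by omega⟩)).card := by
    rw [h2]; exact csSup_Iic
  refine ⟨e1, e2, ?_⟩
  rw [e1, e2]
  have h3 := (masterF (c ⟨i, hiℓ⟩) (c ⟨i - 1, by omega⟩)).2.2.1
  push_cast
  omega

end
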